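/- Let T be a triangle with vertices w, u, v and let Q be a finite set of points in the interior of T. Then there exists a convex chain w = q₀, q₁, ..., q_k, q_{k+1} = v with each qᵢ ∈ Q for 1 ≤ i ≤ k, such that the region bounded by segments wu, uv, and the chain contains no point of Q in its interior. -/

import Mathlib

open Set

/-- Separation helper: if `w` is outside the hull of a finite nonempty set `s`, then `w` is
outside the hull of `s` together with any set of points interior to the hull of `insert w s`. -/
lemma sep_aux {w : ℂ} {s : Set ℂ} (hfin : s.Finite) (hne : s.Nonempty)
    (hw : w ∉ convexHull ℝ s) {t : Set ℂ}
    (ht : t ⊆ interior (convexHull ℝ (insert w s))) :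
    w ∉ convexHull ℝ (s ∪ t) := by
  obtain ⟨f, b, hfb, hbw⟩ := geometric_hahn_banach_closed_point
    (convex_convexHull ℝ s) (hfin.isCompact_convexHull ℝ).isClosed hw
  -- On the hull of `insert w s`, `f ≤ f w`.
  have hhalf : convexHull ℝ (insert w s) ⊆ {x | f x ≤ f w} := by
    apply convexHull_min
    · rintro x (rfl | hx)
      · show f x ≤ f x
        exact le_rfl
      · show f x ≤ f w
        exact (hfb x (subset_convexHull ℝ s hx)).le.trans hbw.le
    · exact convex_halfSpace_le f.isLinear _
  -- `f` is nonzero.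
  obtain ⟨a, ha⟩ := hne
  have hfa : f a < f w := (hfb a (subset_convexHull ℝ s ha)).trans hbw
  have hf0 : f (w - a) > 0 := by
    have := f.map_sub w a; rw [this]; linarith
  -- points of `t` satisfy `f q < f w` strictly
  have hstrict : ∀ q ∈ t, f q < f w := by
    intro q hq
    obtain ⟨ε, hε, hball⟩ := Metric.isOpen_iff.1 isOpen_interior q (ht hq)
    set d : ℂ := w - a with hd
    have hdne : d ≠ 0 := by
      intro h; rw [h] at hf0; simp at hf0
    have hnd : ‖d‖ > 0 := norm_pos_iff.2 hdne
    set q' : ℂ := q + ((ε / 2) * ‖d‖⁻¹) • d with hq'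
    have hq'mem : q' ∈ interior (convexHull ℝ (insert w s)) := by
      apply hball
      rw [Metric.mem_ball, dist_eq_norm]
      have : q' - q = ((ε / 2) * ‖d‖⁻¹) • d := by rw [hq']; ring
      rw [this, norm_smul]
      have h1 : ‖((ε / 2) * ‖d‖⁻¹ : ℝ)‖ = (ε / 2) * ‖d‖⁻¹ := by
        rw [Real.norm_eq_abs, abs_of_pos (by positivity)]
      rw [h1]
      have : ε / 2 * ‖d‖⁻¹ * ‖d‖ = ε / 2 := by
        rw [mul_assoc, inv_mul_cancel₀ hnd.ne', mul_one]
      rw [this]; linarith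
    have hle : f q' ≤ f w := hhalf (interior_subset hq'mem)
    have : f q' = f q + ((ε / 2) * ‖d‖⁻¹) * f d := by
      rw [hq', f.map_add, f.map_smul]; simp
    have hpos : ((ε / 2) * ‖d‖⁻¹) * f d > 0 := by
      apply mul_pos (by positivity) hf0
    linarith
  -- conclude
  intro hmem
  have : convexHull ℝ (s ∪ t) ⊆ {x | f x < f w} := by
    apply convexHull_min
    · rintro x (hx | hx)
      · exact (hfb x (subset_convexHull ℝ s hx)).trans hbw
      · exact hstrict x hx
    · exact convex_halfSpace_lt f.isLinear _
  have hlt : f w < f w := this hmem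
  exact lt_irrefl _ hlt

/-- Nondegeneracy helper: if the triangle `a b c` has nonempty interior then `a` is not in the
segment `b c`. -/
lemma nondeg_aux {a b c : ℂ}
    (h : (interior (convexHull ℝ ({a, b, c} : Set ℂ))).Nonempty) :
    a ∉ convexHull ℝ ({b, c} : Set ℂ) := by
  intro ha
  have hspan : affineSpan ℝ ({a, b, c} : Set ℂ) = ⊤ := by
    have hc : Convex ℝ (convexHull ℝ ({a, b, c} : Set ℂ)) := convex_convexHull ℝ _
    have := (hc.interior_nonempty_iff_affineSpan_eq_top).1 h
    rwa [affineSpan_convexHull] at this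
  have hsub : affineSpan ℝ ({a, b, c} : Set ℂ) ≤ affineSpan ℝ ({b, c} : Set ℂ) := by
    apply affineSpan_le.2
    rintro x (rfl | hx)
    · exact (convexHull_subset_affineSpan _) ha
    · exact subset_affineSpan ℝ _ hx
  have htop : affineSpan ℝ ({b, c} : Set ℂ) = ⊤ := top_le_iff.1 (hspan ▸ hsub)
  have hdir : vectorSpan ℝ ({b, c} : Set ℂ) = ⊤ := by
    rw [← direction_affineSpan, htop]; exact AffineSubspace.direction_top ℝ ℂ ℂ
  have h1 : Module.finrank ℝ (vectorSpan ℝ ({b, c} : Set ℂ)) ≤ 1 := by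
    rw [vectorSpan_pair]
    by_cases hbc : b -ᵥ c = (0 : ℂ)
    · rw [hbc, Submodule.span_zero_singleton]
      rw [finrank_bot]
      omega
    · rw [finrank_span_singleton hbc]
  rw [hdir] at h1
  have h2 : Module.finrank ℝ (⊤ : Submodule ℝ ℂ) = 2 := by
    rw [finrank_top]; exact Complex.finrank_real_complex
  omega

theorem stmt4 (w u v : ℂ) (Q : Finset ℂ)
    (hQ : ∀ q ∈ Q, q ∈ interior (convexHull ℝ ({w, u, v} : Set ℂ))) :
    ∃ (k : ℕ) (c : Fin (k + 2) → ℂ),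
      c 0 = w ∧ c (Fin.last (k + 1)) = v ∧
      (∀ i : Fin (k + 2), i ≠ 0 → i ≠ Fin.last (k + 1) → c i ∈ Q) ∧
      -- the chain is convex: every chain point is a vertex (extreme point) of
      -- the convex hull of `Q ∪ {w, v}`, and the chain carries that hull
      (∀ i : Fin (k + 2),
        c i ∉ convexHull ℝ ((insert w (insert v (Q : Set ℂ))) \ {c i})) ∧
      (Q : Set ℂ) ⊆ convexHull ℝ (Set.range c) ∧
      -- the region bounded by `wu`, `uv` and the chain is empty of `Q`
      (∀ q ∈ Q,
        q ∉ interior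
          (convexHull ℝ ({w, u, v} : Set ℂ) \ convexHull ℝ (Set.range c))) := by
  classical
  rcases Q.eq_empty_or_nonempty with rfl | hQne
  · -- empty case
    refine ⟨0, ![w, v], rfl, rfl, ?_, ?_, by simp, by simp⟩
    · intro i h0 h1
      exfalso
      fin_cases i
      · exact h0 rfl
      · exact h1 rfl
    · intro i
      fin_cases i <;> simp only [Finset.coe_empty, LawfulSingleton.insert_empty_eq]
      · show w ∉ convexHull ℝ (({w, v} : Set ℂ) \ {w})
        by_cases hwv : w = v
        · have : ({w, v} : Set ℂ) \ {w} = ∅ := by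
            subst hwv; simp
          rw [this, convexHull_empty]; exact notMem_empty w
        · have : ({w, v} : Set ℂ) \ {w} ⊆ {v} := by
            rintro x ⟨hx | hx, hx2⟩ <;> simp_all
          intro h
          have := convexHull_mono this h
          rw [convexHull_singleton] at this
          exact hwv this
      · show v ∉ convexHull ℝ (({w, v} : Set ℂ) \ {v})
        by_cases hwv : w = v
        · have : ({w, v} : Set ℂ) \ {v} = ∅ := by
            subst hwv; simp
          rw [this, convexHull_empty]; exact notMem_empty v
        · have : ({w, v} : Set ℂ) \ {v} ⊆ {w} := by
            rintro x ⟨hx | hx, hx2⟩ <;> simp_all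
          intro h
          have := convexHull_mono this h
          rw [convexHull_singleton] at this
          exact hwv this.symm
  · -- nonempty case
    obtain ⟨q0, hq0⟩ := hQne
    have hint : (interior (convexHull ℝ ({w, u, v} : Set ℂ))).Nonempty :=
      ⟨q0, hQ q0 hq0⟩
    -- w not in hull {u, v}
    have hw1 : w ∉ convexHull ℝ ({u, v} : Set ℂ) := nondeg_aux hint
    have hv1 : v ∉ convexHull ℝ ({w, u} : Set ℂ) := by
      have h2 : ({v, w, u} : Set ℂ) = {w, u, v} := by
        ext x; simp [or_comm, or_assoc, or_left_comm]
      apply nondeg_aux (a := v) (b := w) (c := u)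
      rwa [h2]
    -- separation results
    have hwsep : w ∉ convexHull ℝ (({u, v} : Set ℂ) ∪ ↑Q) := by
      apply sep_aux ((Set.finite_singleton v).insert u) ⟨u, mem_insert u {v}⟩ hw1
      intro q hq
      have : (insert w ({u, v} : Set ℂ)) = {w, u, v} := rfl
      rw [this]; exact hQ q hq
    have hvsep : v ∉ convexHull ℝ (({w, u} : Set ℂ) ∪ ↑Q) := by
      apply sep_aux ((Set.finite_singleton u).insert w) ⟨w, mem_insert w {u}⟩ hv1
      intro q hq
      have h2 : (insert v ({w, u} : Set ℂ)) = {w, u, v} := by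
        ext x; simp [or_comm, or_assoc, or_left_comm]
      rw [h2]; exact hQ q hq
    -- the hull setup
    set S : Set ℂ := insert w (insert v ↑Q) with hSdef
    have hSfin : S.Finite := (Q.finite_toSet.insert v).insert w
    set A : Set ℂ := convexHull ℝ S with hAdef
    set F : Set ℂ := A.extremePoints ℝ with hFdef
    have hFsub : F ⊆ S := extremePoints_convexHull_subset
    have hFfin : F.Finite := hSfin.subset hFsub
    have hullF : convexHull ℝ F = A := by
      have hcomp : IsCompact A := hSfin.isCompact_convexHull ℝ
      have hKM := closure_convexHull_extremePoints hcomp (convex_convexHull ℝ S)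
      rw [← hKM]
      exact ((hFfin.isCompact_convexHull ℝ).isClosed.closure_eq).symm
    have hext : ∀ x ∈ F, x ∉ convexHull ℝ (S \ {x}) := by
      intro x hx hmem
      have h1 := ((convex_convexHull ℝ S).mem_extremePoints_iff_mem_diff_convexHull_diff).1 hx
      exact h1.2 (convexHull_mono (diff_subset_diff_left (subset_convexHull ℝ S)) hmem)
    -- the list of extreme points other than w, v
    set l : List ℂ := (hFfin.toFinset \ {w, v}).toList with hldef
    set k : ℕ := l.length with hkdef
    have hlmem : ∀ x ∈ l, x ∈ F ∧ x ≠ w ∧ x ≠ v := by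
      intro x hx
      rw [hldef, Finset.mem_toList, Finset.mem_sdiff, Finset.mem_insert,
        Finset.mem_singleton, hFfin.mem_toFinset] at hx
      exact ⟨hx.1, fun h => hx.2 (Or.inl h), fun h => hx.2 (Or.inr h)⟩
    set c : Fin (k + 2) → ℂ := fun i =>
      if i.val = 0 then w else if i.val = k + 1 then v else l.getD (i.val - 1) w with hcdef
    have hc0 : c 0 = w := by simp [hcdef]
    have hclast : c (Fin.last (k + 1)) = v := by simp [hcdef, Fin.last]
    have hcmid : ∀ i : Fin (k + 2), i ≠ 0 → i ≠ Fin.last (k + 1) →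
        ∃ h : i.val - 1 < k, c i = l[i.val - 1]'h := by
      intro i h0 h1
      have hv0 : i.val ≠ 0 := fun h => h0 (Fin.ext h)
      have hv1 : i.val ≠ k + 1 := fun h => h1 (Fin.ext (by simp [Fin.last, h]))
      have hlt : i.val < k + 2 := i.isLt
      have hbound : i.val - 1 < k := by omega
      refine ⟨hbound, ?_⟩
      simp only [hcdef, if_neg hv0, if_neg hv1]
      exact List.getD_eq_getElem l w hbound
    -- chain points are in Q
    have hinQ : ∀ i : Fin (k + 2), i ≠ 0 → i ≠ Fin.last (k + 1) → c i ∈ Q := by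
      intro i h0 h1
      obtain ⟨h, hci⟩ := hcmid i h0 h1
      have hmem : c i ∈ l := by rw [hci]; exact List.getElem_mem h
      obtain ⟨hF', hw', hv'⟩ := hlmem _ hmem
      have := hFsub hF'
      rw [hSdef] at this
      rcases this with h' | h' | h'
      · exact absurd h' hw'
      · exact absurd h' hv'
      · exact h'
    -- extreme point property
    have hextreme : ∀ i : Fin (k + 2),
        c i ∉ convexHull ℝ ((insert w (insert v (Q : Set ℂ))) \ {c i}) := by
      intro i
      by_cases h0 : i = 0
      · subst h0
        rw [hc0]
        intro hmem
        apply hwsep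
        apply convexHull_mono ?_ hmem
        rintro x ⟨hx, hx2⟩
        rcases hx with rfl | hx
        · exact absurd rfl hx2
        · rcases hx with rfl | hx
          · exact Or.inl (Or.inr rfl)
          · exact Or.inr hx
      · by_cases h1 : i = Fin.last (k + 1)
        · subst h1
          rw [hclast]
          intro hmem
          apply hvsep
          apply convexHull_mono ?_ hmem
          rintro x ⟨hx, hx2⟩
          rcases hx with rfl | hx
          · exact Or.inl (Or.inl rfl)
          · rcases hx with rfl | hx
            · exact absurd rfl hx2
            · exact Or.inr hx
        · obtain ⟨h, hci⟩ := hcmid i h0 h1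
          have hmem : c i ∈ l := by rw [hci]; exact List.getElem_mem h
          exact hext _ (hlmem _ hmem).1
    -- Q is inside the hull of the chain
    have hFrange : F ⊆ Set.range c := by
      intro x hx
      by_cases hxw : x = w
      · exact ⟨0, by rw [hc0, hxw]⟩
      · by_cases hxv : x = v
        · exact ⟨Fin.last (k + 1), by rw [hclast, hxv]⟩
        · have hxl : x ∈ l := by
            rw [hldef, Finset.mem_toList, Finset.mem_sdiff, hFfin.mem_toFinset]
            exact ⟨hx, by simp [hxw, hxv]⟩
          obtain ⟨j, hj, hget⟩ := List.mem_iff_getElem.1 hxl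
          refine ⟨⟨j + 1, by omega⟩, ?_⟩
          have h0 : (j + 1 : ℕ) ≠ 0 := by omega
          have h1 : (j + 1 : ℕ) ≠ k + 1 := by omega
          simp only [hcdef, if_neg h0, if_neg h1]
          rw [Nat.add_sub_cancel]
          rw [List.getD_eq_getElem l w hj]
          exact hget
    have hQhull : (Q : Set ℂ) ⊆ convexHull ℝ (Set.range c) := by
      intro q hq
      have h1 : q ∈ A := subset_convexHull ℝ S (by rw [hSdef]; exact Or.inr (Or.inr hq))
      rw [← hullF] at h1
      exact convexHull_mono hFrange h1
    refine ⟨k, c, hc0, hclast, hinQ, hextreme, hQhull, ?_⟩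
    intro q hq hmem
    exact (interior_subset hmem).2 (hQhull hq)
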